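/- arXiv:math/0307047 — 2 statements merged into one kernel-verified Lean document; each statement's English description precedes it below -/
import Mathlib

section
/- Let A be a unital ring, S a countably infinite set, B = M_S(A) the ring of column-finite matrices, endowed with the finite topology. The functors F(M) = A^{⊕S} ⊗_A M and G(N) = Hom_B(A^{⊕S}, N) are mutually quasi-inverse and give an equivalence between the category of finitely generated left A-modules and the category of smooth finitely generated left B-modules (a B-module is smooth if the annihilator of each element is open). -/
open Finsupp MulOpposite

namespace Stmt4Aux

noncomputable section

variable {A : Type} [Ring A] {S : Type}

abbrev BB (A S : Type) [Ring A] := Module.End Aᵐᵒᵖ (S →₀ A)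

/-- left multiplication by `a` as an `Aᵐᵒᵖ`-linear endomorphism of `A`. -/
def lmulA (a : A) : A →ₗ[Aᵐᵒᵖ] A where
  toFun x := a * x
  map_add' := mul_add a
  map_smul' b x := by
    simp only [MulOpposite.smul_eq_mul_unop, RingHom.id_apply, mul_assoc]

/-- matrix unit with entry `a` in position `(s, t)`. -/
def elemMap (a : A) (s t : S) : BB A S :=
  (Finsupp.lsingle s) ∘ₗ (lmulA a) ∘ₗ (Finsupp.lapply t)

@[simp] lemma elemMap_apply (a : A) (s t : S) (v : S →₀ A) :
    elemMap a s t v = Finsupp.single s (a * v t) := rfl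

lemma elemMap_add (a b : A) (s t : S) :
    elemMap (a + b) s t = elemMap a s t + elemMap b s t := by
  apply LinearMap.ext; intro v
  simp [add_mul, Finsupp.single_add]

lemma elemMap_zero (s t : S) : elemMap (0 : A) s t = 0 := by
  apply LinearMap.ext; intro v; simp

lemma elemMap_mul (a b : A) (s t t' u : S) [DecidableEq S] :
    elemMap a s t * elemMap b t' u = if t = t' then elemMap (a * b) s u else 0 := by
  apply LinearMap.ext; intro v
  show elemMap a s t (elemMap b t' u v) = _
  simp only [elemMap_apply, Finsupp.single_apply]
  split
  · rename_i h
    subst h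
    simp [mul_assoc]
  · rename_i h
    rw [if_neg (fun hh => h hh.symm)]
    simp

lemma single_eq_op_smul (t : S) (c : A) :
    Finsupp.single t c = (op c) • (Finsupp.single t 1 : S →₀ A) := by
  rw [Finsupp.smul_single]
  simp [MulOpposite.smul_eq_mul_unop]

lemma apply_eq_sum (f : BB A S) (v : S →₀ A) :
    f v = v.sum fun t a => (op a) • f (Finsupp.single t 1) := by
  conv_lhs => rw [← Finsupp.sum_single v]
  rw [map_finsuppSum]
  refine Finsupp.sum_congr fun t _ => ?_
  rw [single_eq_op_smul, map_smul]

lemma op_smul_eq_sum (c : A) (v : S →₀ A) :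
    (op c) • v = v.sum fun s a => Finsupp.single s (a * c) := by
  conv_lhs => rw [← Finsupp.sum_single v]
  rw [Finsupp.smul_sum]
  refine Finsupp.sum_congr fun s _ => ?_
  rw [Finsupp.smul_single]
  simp [MulOpposite.smul_eq_mul_unop]

lemma mul_elemMap_col (f : BB A S) (t s0 : S) :
    f * elemMap 1 t s0 = (f (Finsupp.single t 1)).sum fun s a => elemMap a s s0 := by
  apply LinearMap.ext; intro w
  show f (elemMap 1 t s0 w) = _
  have h2 : ((f (Finsupp.single t 1)).sum fun s a => elemMap a s s0) w
      = (f (Finsupp.single t 1)).sum fun s a => Finsupp.single s (a * w s0) := by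
    rw [Finsupp.sum, Finsupp.sum, LinearMap.sum_apply]
    simp
  rw [h2, elemMap_apply, one_mul, single_eq_op_smul t (w s0), map_smul, op_smul_eq_sum]

/-- `elemMap 1 s0 u * g * elemMap 1 t t = elemMap ((g (single t 1)) u) s0 t` -/
lemma row_mul_diag (g : BB A S) (s0 u t : S) :
    elemMap (1:A) s0 u * g * elemMap 1 t t = elemMap ((g (Finsupp.single t 1)) u) s0 t := by
  apply LinearMap.ext; intro w
  show elemMap (1:A) s0 u (g (elemMap 1 t t w)) = _
  simp only [elemMap_apply, one_mul, Finsupp.single_apply, if_pos rfl]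
  rw [single_eq_op_smul t (w t), map_smul]
  simp [MulOpposite.smul_eq_mul_unop, mul_assoc]

section FMod

variable {M : Type} [AddCommGroup M] [Module A M]

/-- the action of the matrix ring `BB A S` on `S →₀ M`. -/
def bsmulFun (f : BB A S) (x : S →₀ M) : S →₀ M :=
  x.sum fun t m => (f (Finsupp.single t 1)).mapRange (· • m) (zero_smul A m)

lemma mapRange_smul_zero (v : S →₀ A) :
    v.mapRange (· • (0 : M)) (zero_smul A 0) = 0 := by ext s; simp

lemma bsmulFun_single (f : BB A S) (t : S) (m : M) :
    bsmulFun f (Finsupp.single t m)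
      = (f (Finsupp.single t 1)).mapRange (· • m) (zero_smul A m) := by
  rw [bsmulFun, Finsupp.sum_single_index]
  exact mapRange_smul_zero _

lemma bsmulFun_zero (f : BB A S) : bsmulFun f (0 : S →₀ M) = 0 := by
  simp [bsmulFun]

lemma bsmulFun_add (f : BB A S) (x y : S →₀ M) :
    bsmulFun f (x + y) = bsmulFun f x + bsmulFun f y := by
  rw [bsmulFun, Finsupp.sum_add_index']
  · rfl
  · intro t; exact mapRange_smul_zero _
  · intro t m₁ m₂
    ext s
    simp [Finsupp.mapRange_apply, smul_add]

lemma bsmulFun_mul (f g : BB A S) (x : S →₀ M) :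
    bsmulFun (f * g) x = bsmulFun f (bsmulFun g x) := by
  induction x using Finsupp.induction with
  | zero => simp [bsmulFun_zero]
  | single_add t m x _ _ ih =>
    rw [bsmulFun_add, bsmulFun_add, bsmulFun_add, ih]
    congr 1
    rw [bsmulFun_single g, bsmulFun_single (f * g)]
    rw [Finsupp.ext_iff]
    intro s
    rw [bsmulFun, Finsupp.sum_mapRange_index (fun a => by ext s'; simp)]
    rw [Finsupp.sum_apply]
    show ((f * g) (Finsupp.single t 1)).mapRange (· • m) (zero_smul A m) s = _
    rw [Finsupp.mapRange_apply]
    rw [show (f * g) (Finsupp.single t 1) = f (g (Finsupp.single t 1)) from rfl]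
    rw [apply_eq_sum f (g (Finsupp.single t 1))]
    rw [Finsupp.sum_apply]
    rw [Finsupp.sum, Finsupp.sum, Finset.sum_smul]
    refine Finset.sum_congr rfl fun u _ => ?_
    rw [Finsupp.mapRange_apply, Finsupp.smul_apply, MulOpposite.smul_eq_mul_unop,
      MulOpposite.unop_op, mul_smul]

/-- the module structure of the matrix ring `BB A S` on `S →₀ M`. -/
def fmodule : Module (BB A S) (S →₀ M) where
  smul := bsmulFun
  one_smul x := by
    show bsmulFun 1 x = x
    conv_rhs => rw [← Finsupp.sum_single x]
    refine Finsupp.sum_congr fun t _ => ?_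
    rw [show (1 : BB A S) (Finsupp.single t 1) = Finsupp.single t 1 from rfl,
      Finsupp.mapRange_single, one_smul]
  mul_smul f g x := bsmulFun_mul f g x
  smul_zero f := bsmulFun_zero f
  smul_add f x y := bsmulFun_add f x y
  add_smul f g x := by
    show bsmulFun (f + g) x = bsmulFun f x + bsmulFun g x
    rw [bsmulFun, bsmulFun, bsmulFun, ← Finsupp.sum_add]
    refine Finsupp.sum_congr fun t _ => ?_
    rw [LinearMap.add_apply]
    ext s
    simp [Finsupp.mapRange_apply, add_smul]
  zero_smul x := by
    show bsmulFun 0 x = 0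
    rw [bsmulFun, Finsupp.sum]
    refine Finset.sum_eq_zero fun t _ => ?_
    ext s
    simp

attribute [local instance] fmodule

lemma smul_def (f : BB A S) (x : S →₀ M) : f • x = bsmulFun f x := rfl

lemma elemMap_smul_single [DecidableEq S] (a : A) (s t t' : S) (m : M) :
    elemMap a s t • (Finsupp.single t' m : S →₀ M)
      = if t = t' then Finsupp.single s (a • m) else 0 := by
  rw [smul_def, bsmulFun_single, elemMap_apply]
  by_cases h : t = t'
  · subst h
    rw [if_pos rfl, Finsupp.single_eq_same, mul_one, Finsupp.mapRange_single]
  · rw [if_neg h, Finsupp.single_eq_of_ne' (fun hh => h hh.symm), mul_zero]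
    ext s'
    simp

lemma F_smooth (x : S →₀ M) (f : BB A S)
    (hf : ∀ v : S →₀ A, (v.support : Set S) ⊆ (x.support : Set S) → f v = 0) :
    f • x = 0 := by
  rw [smul_def, bsmulFun, Finsupp.sum]
  refine Finset.sum_eq_zero fun t ht => ?_
  have h1 : f (Finsupp.single t 1) = 0 := by
    refine hf _ (fun u hu => ?_)
    have h2 : u ∈ ({t} : Finset S) := Finsupp.support_single_subset hu
    rw [Finset.mem_singleton] at h2
    subst h2
    exact_mod_cast ht
  rw [h1]
  ext s
  simp

lemma F_finite (s0 : S) [Module.Finite A M] : Module.Finite (BB A S) (S →₀ M) := by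
  classical
  obtain ⟨G, hG⟩ := Module.Finite.fg_top (R := A) (M := M)
  refine ⟨⟨G.image (Finsupp.single s0), ?_⟩⟩
  rw [eq_top_iff]
  rintro x -
  have hT : ∀ m : M, Finsupp.single s0 m ∈
      Submodule.span (BB A S) ((G.image (Finsupp.single s0) : Set (S →₀ M))) := by
    intro m
    have hm : m ∈ Submodule.span A (G : Set M) := hG ▸ Submodule.mem_top
    induction hm using Submodule.span_induction with
    | mem y hy => exact Submodule.subset_span (by simpa using ⟨y, hy, rfl⟩)
    | zero => simp
    | add y z _ _ hy hz => rw [Finsupp.single_add]; exact Submodule.add_mem _ hy hz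
    | smul a y _ hy =>
      have : Finsupp.single s0 (a • y) = elemMap a s0 s0 • Finsupp.single s0 y := by
        rw [elemMap_smul_single, if_pos rfl]
      rw [this]
      exact Submodule.smul_mem _ _ hy
  induction x using Finsupp.induction with
  | zero => simp
  | single_add t m x _ _ ih =>
    refine Submodule.add_mem _ ?_ ih
    have : Finsupp.single t m = elemMap (1:A) t s0 • Finsupp.single s0 m := by
      rw [elemMap_smul_single, if_pos rfl, one_smul]
    rw [this]
    exact Submodule.smul_mem _ _ (hT m)

end FMod

section Corner

variable (R : Type) [Ring R] {T : Type} (s0 : T) (N : Type) [AddCommGroup N]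
  [Module (BB R T) N]

/-- the corner `e N` where `e` is the idempotent `elemMap 1 s0 s0`. -/
def corner : Submodule ℤ N where
  carrier := {n | elemMap (1:R) s0 s0 • n = n}
  add_mem' := by
    intro a b ha hb
    simp only [Set.mem_setOf_eq] at *
    rw [smul_add, ha, hb]
  zero_mem' := by simp
  smul_mem' := by
    intro z n hn
    simp only [Set.mem_setOf_eq] at *
    rw [smul_comm, hn]

variable {N}

lemma corner_mem_iff (n : N) : n ∈ corner R s0 N ↔ elemMap (1:R) s0 s0 • n = n := Iff.rfl

lemma elemMap_smul_mem_corner (a : R) (t : T) (n : N) :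
    elemMap a s0 t • n ∈ corner R s0 N := by
  classical
  rw [corner_mem_iff, ← mul_smul, elemMap_mul, if_pos rfl, one_mul]

variable (N)

/-- the `R`-module structure on the corner. -/
def cornerModule : Module R (corner R s0 N) where
  smul a x := ⟨elemMap a s0 s0 • (x : N), elemMap_smul_mem_corner R s0 a s0 (x : N)⟩
  one_smul x := Subtype.ext (x.2 : elemMap (1:R) s0 s0 • (x:N) = x)
  mul_smul a b x := by
    classical
    refine Subtype.ext ?_
    show elemMap (a * b) s0 s0 • (x : N) = elemMap a s0 s0 • elemMap b s0 s0 • (x : N)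
    rw [← mul_smul, elemMap_mul, if_pos rfl]
  smul_zero a := Subtype.ext (by
    show elemMap a s0 s0 • ((0 : corner R s0 N) : N) = ((0 : corner R s0 N) : N)
    simp)
  smul_add a x y := Subtype.ext (by
    show elemMap a s0 s0 • ((x : N) + (y : N)) = _
    rw [smul_add]
    rfl)
  add_smul a b x := Subtype.ext (by
    show elemMap (a + b) s0 s0 • (x : N) = _
    rw [elemMap_add, add_smul]
    rfl)
  zero_smul x := Subtype.ext (by
    show elemMap (0:R) s0 s0 • (x : N) = 0
    rw [elemMap_zero, zero_smul])

attribute [local instance] cornerModule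

variable {N}

lemma corner_smul_coe (a : R) (x : corner R s0 N) :
    ((a • x : corner R s0 N) : N) = elemMap a s0 s0 • (x : N) := rfl

end Corner

section Maps

attribute [local instance] fmodule cornerModule

variable (s0 : S)

section
variable {M M' : Type} [AddCommGroup M] [Module A M] [AddCommGroup M'] [Module A M']

/-- functorial action on maps for `M ↦ S →₀ M`. -/
def fmapL (φ : M →ₗ[A] M') : (S →₀ M) →ₗ[BB A S] (S →₀ M') where
  toFun x := x.mapRange φ φ.map_zero
  map_add' x y := Finsupp.mapRange_add φ.map_add x y
  map_smul' f x := by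
    simp only [RingHom.id_apply]
    induction x using Finsupp.induction with
    | zero => simp [smul_def, bsmulFun_zero]
    | single_add t m x _ _ ih =>
      rw [Finsupp.mapRange_add φ.map_add, smul_def, bsmulFun_add, smul_def, bsmulFun_add,
        Finsupp.mapRange_add φ.map_add, ← smul_def, ← smul_def, ← smul_def, ih]
      congr 1
      rw [Finsupp.mapRange_single, smul_def, smul_def, bsmulFun_single, bsmulFun_single]
      ext s
      simp [Finsupp.mapRange_apply, map_smul]

@[simp] lemma fmapL_apply (φ : M →ₗ[A] M') (x : S →₀ M) :
    fmapL φ x = x.mapRange φ φ.map_zero := rfl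

lemma e_smul_eq (x : S →₀ M) :
    elemMap (1:A) s0 s0 • x = Finsupp.single s0 (x s0) := by
  classical
  induction x using Finsupp.induction with
  | zero => simp [smul_def, bsmulFun_zero]
  | single_add t m x ht _ ih =>
    rw [smul_def, bsmulFun_add, ← smul_def, ← smul_def, ih, elemMap_smul_single]
    rw [Finsupp.add_apply, Finsupp.single_apply, Finsupp.single_add]
    by_cases h : s0 = t
    · subst h
      rw [if_pos rfl, if_pos rfl]
      simp
    · rw [if_neg h, if_neg (fun hh => h hh.symm)]
      simp

/-- the unit `M ≃ e (S →₀ M)`. -/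
def unitEquiv : M ≃ₗ[A] corner A s0 (S →₀ M) where
  toFun m := ⟨Finsupp.single s0 m, by
    rw [corner_mem_iff, e_smul_eq, Finsupp.single_eq_same]⟩
  invFun x := (x : S →₀ M) s0
  left_inv m := by simp
  right_inv x := by
    refine Subtype.ext ?_
    show Finsupp.single s0 ((x : S →₀ M) s0) = (x : S →₀ M)
    conv_rhs => rw [← x.2]
    rw [e_smul_eq]
  map_add' m m' := Subtype.ext (Finsupp.single_add s0 m m')
  map_smul' a m := by
    refine Subtype.ext ?_
    show Finsupp.single s0 (a • m) = elemMap a s0 s0 • Finsupp.single s0 m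
    classical
    rw [elemMap_smul_single, if_pos rfl]

end

section
variable {N N' : Type} [AddCommGroup N] [Module (BB A S) N]
  [AddCommGroup N'] [Module (BB A S) N']

/-- functorial action on maps for the corner. -/
def cornerMap (ψ : N →ₗ[BB A S] N') : corner A s0 N →ₗ[A] corner A s0 N' where
  toFun x := ⟨ψ (x : N), by
    rw [corner_mem_iff, ← map_smul, x.2]⟩
  map_add' x y := Subtype.ext (by
    show ψ ((x : N) + (y : N)) = ψ (x : N) + ψ (y : N)
    rw [map_add])
  map_smul' a x := Subtype.ext (by
    show ψ (elemMap a s0 s0 • (x : N)) = elemMap a s0 s0 • ψ (x : N)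
    rw [map_smul])

@[simp] lemma cornerMap_coe (ψ : N →ₗ[BB A S] N') (x : corner A s0 N) :
    ((cornerMap s0 ψ x : corner A s0 N') : N') = ψ (x : N) := rfl

/-- projection onto coordinates in `E`. -/
lemma proj_apply [DecidableEq S] (E : Finset S) (v : S →₀ A)
    (hv : (v.support : Set S) ⊆ (E : Set S)) :
    (∑ t ∈ E, elemMap (1:A) t t) v = v := by
  rw [LinearMap.sum_apply]
  ext s
  rw [Finset.sum_apply']
  simp only [elemMap_apply, one_mul, Finsupp.single_apply]
  rw [Finset.sum_ite_eq' E s (fun t => v t)]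
  by_cases h : s ∈ E
  · rw [if_pos h]
  · rw [if_neg h]
    by_contra hc
    exact h (hv (by simpa using fun hh => hc hh.symm))

/-- key decomposition: smooth elements are fixed by finite projections. -/
lemma decomp [DecidableEq S] (n : N) (E : Finset S)
    (hE : ∀ f : BB A S, (∀ v : S →₀ A, (v.support : Set S) ⊆ (E : Set S) → f v = 0)
      → f • n = 0) (g : BB A S) :
    g • n = ∑ t ∈ E, (g * elemMap 1 t t) • n := by
  have h1 : (g - ∑ t ∈ E, g * elemMap 1 t t) • n = 0 := by
    refine hE _ fun v hv => ?_
    rw [← Finset.mul_sum, LinearMap.sub_apply,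
      show (g * ∑ t ∈ E, elemMap (1:A) t t) v = g ((∑ t ∈ E, elemMap (1:A) t t) v) from rfl,
      proj_apply E v hv, sub_self]
  have h2 : g = (g - ∑ t ∈ E, g * elemMap 1 t t) + ∑ t ∈ E, g * elemMap 1 t t := by
    abel
  rw [h2, add_smul, h1, zero_add, Finset.sum_smul]
  exact Finset.sum_congr rfl fun t _ => by rw [← h2]

/-- the counit map `S →₀ (e N) → N`. -/
def counitMap : (S →₀ corner A s0 N) →ₗ[BB A S] N where
  toFun x := x.sum fun t m => elemMap (1:A) t s0 • (m : N)
  map_add' x y := by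
    refine Finsupp.sum_add_index' (fun t => by simp) (fun t m₁ m₂ => ?_)
    show elemMap (1:A) t s0 • ((m₁ : N) + (m₂ : N)) = _
    rw [smul_add]
  map_smul' f x := by
    simp only [RingHom.id_apply]
    induction x using Finsupp.induction with
    | zero =>
      rw [smul_def, bsmulFun_zero]
      simp
    | single_add t m x _ _ ih =>
      rw [smul_def, bsmulFun_add, ← smul_def, ← smul_def]
      rw [Finsupp.sum_add_index' (fun t => by simp)
        (fun t m₁ m₂ => by show elemMap (1:A) t s0 • ((m₁ : N) + (m₂ : N)) = _; rw [smul_add])]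
      rw [Finsupp.sum_add_index' (fun t => by simp)
        (fun t m₁ m₂ => by show elemMap (1:A) t s0 • ((m₁ : N) + (m₂ : N)) = _; rw [smul_add])]
      rw [smul_add, ← ih]
      congr 1
      -- single case
      classical
      rw [Finsupp.sum_single_index (by simp), smul_def, bsmulFun_single]
      rw [Finsupp.sum_mapRange_index (fun s => by simp)]
      rw [← mul_smul, mul_elemMap_col f t s0]
      rw [Finsupp.sum, Finsupp.sum, Finset.sum_smul]
      refine Finset.sum_congr rfl fun s _ => ?_
      show elemMap (1:A) s s0 • ((_ • m : corner A s0 N) : N) = _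
      rw [show ∀ (a : A), ((a • m : corner A s0 N) : N) = elemMap a s0 s0 • (m : N)
        from fun a => rfl]
      rw [← mul_smul, elemMap_mul, if_pos rfl, one_mul]

lemma counitMap_single (t : S) (m : corner A s0 N) :
    counitMap s0 (Finsupp.single t m) = elemMap (1:A) t s0 • (m : N) := by
  show ((Finsupp.single t m).sum fun u (m' : corner A s0 N) => elemMap (1:A) u s0 • (m' : N)) = _
  rw [Finsupp.sum_single_index (by simp)]

lemma counitMap_injective : Function.Injective (counitMap (A := A) s0 (N := N)) := by
  classical
  intro x y hxy
  rw [← sub_eq_zero, ← map_sub] at hxy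
  rw [← sub_eq_zero]
  set z := x - y with hz
  have key : ∀ t : S, ((z t : corner A s0 N) : N) = elemMap (1:A) s0 t • counitMap s0 z := by
    intro t
    show _ = elemMap (1:A) s0 t • z.sum fun u m => elemMap (1:A) u s0 • (m : N)
    rw [Finsupp.smul_sum]
    have : ∀ (u : S) (m : corner A s0 N),
        elemMap (1:A) s0 t • elemMap (1:A) u s0 • (m : N)
          = if t = u then (m : N) else 0 := by
      intro u m
      rw [← mul_smul, elemMap_mul, one_mul]
      split
      · rename_i h
        subst h
        exact m.2
      · rw [zero_smul]
    have h4 : (z.sum fun u m => elemMap (1:A) s0 t • elemMap (1:A) u s0 • (m : N))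
        = z.sum fun u (m : corner A s0 N) => if t = u then (m : N) else 0 :=
      Finsupp.sum_congr fun u _ => this u (z u)
    rw [h4, Finsupp.sum_ite_eq z t (fun u (m : corner A s0 N) => (m : N))]
    split
    · rfl
    · rename_i h
      rw [Finsupp.notMem_support_iff.1 h]
      rfl
  ext t
  show ((z t : corner A s0 N) : N) = ((0 : corner A s0 N) : N)
  rw [key t, hxy, smul_zero]
  rfl

lemma counitMap_surjective [Module.Finite (BB A S) N]
    (hsm : ∀ n : N, ∃ E : Finset S, ∀ f : BB A S,
      (∀ v : S →₀ A, (v.support : Set S) ⊆ (E : Set S) → f v = 0) → f • n = 0) :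
    Function.Surjective (counitMap (A := A) s0 (N := N)) := by
  classical
  have hr : LinearMap.range (counitMap (A := A) s0 (N := N)) = ⊤ := by
    rw [eq_top_iff]
    obtain ⟨G, hG⟩ := Module.Finite.fg_top (R := BB A S) (M := N)
    rw [← hG, Submodule.span_le]
    intro n hn
    obtain ⟨E, hE⟩ := hsm n
    refine ⟨∑ t ∈ E, Finsupp.single t
      (⟨elemMap (1:A) s0 t • n, elemMap_smul_mem_corner A s0 1 t n⟩ : corner A s0 N), ?_⟩
    rw [map_sum]
    have h1 : ∀ t : S, counitMap s0 (Finsupp.single t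
        (⟨elemMap (1:A) s0 t • n, elemMap_smul_mem_corner A s0 1 t n⟩ : corner A s0 N))
        = ((1 : BB A S) * elemMap (1:A) t t) • n := by
      intro t
      rw [counitMap_single, one_mul]
      show elemMap (1:A) t s0 • elemMap (1:A) s0 t • n = _
      rw [← mul_smul, elemMap_mul, if_pos rfl, one_mul]
    rw [Finset.sum_congr rfl fun t _ => h1 t]
    rw [← decomp n E hE 1, one_smul]
  intro n
  have : n ∈ LinearMap.range (counitMap (A := A) s0 (N := N)) := hr ▸ Submodule.mem_top
  exact this

lemma corner_finite [Module.Finite (BB A S) N]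
    (hsm : ∀ n : N, ∃ E : Finset S, ∀ f : BB A S,
      (∀ v : S →₀ A, (v.support : Set S) ⊆ (E : Set S) → f v = 0) → f • n = 0) :
    Module.Finite A (corner A s0 N) := by
  classical
  obtain ⟨G, hG⟩ := Module.Finite.fg_top (R := BB A S) (M := N)
  set gens : Set (corner A s0 N) := ⋃ n ∈ (G : Set N), (fun t =>
    (⟨elemMap (1:A) s0 t • n, elemMap_smul_mem_corner A s0 1 t n⟩ : corner A s0 N))
      '' ((hsm n).choose : Set S) with hgens
  have hfin : gens.Finite :=
    Set.Finite.biUnion G.finite_toSet fun n _ => ((hsm n).choose.finite_toSet.image _)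
  refine ⟨Submodule.fg_def.2 ⟨gens, hfin, ?_⟩⟩
  rw [eq_top_iff]
  rintro x -
  have key : ∀ n : N, n ∈ Submodule.span (BB A S) (G : Set N) → ∀ t : S,
      (⟨elemMap (1:A) s0 t • n, elemMap_smul_mem_corner A s0 1 t n⟩ : corner A s0 N)
        ∈ Submodule.span A gens := by
    intro n hn
    induction hn using Submodule.span_induction with
    | mem y hy =>
      intro t
      by_cases ht : t ∈ (hsm y).choose
      · refine Submodule.subset_span ?_
        rw [hgens]
        refine Set.mem_biUnion hy ?_
        exact ⟨t, by exact_mod_cast ht, rfl⟩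
      · have h0 : elemMap (1:A) s0 t • y = 0 := by
          refine (hsm y).choose_spec (elemMap (1:A) s0 t) fun v hv => ?_
          rw [elemMap_apply, one_mul]
          have : v t = 0 := Finsupp.notMem_support_iff.1 fun hc => ht (by exact_mod_cast hv hc)
          rw [this, Finsupp.single_zero]
        have : (⟨elemMap (1:A) s0 t • y, elemMap_smul_mem_corner A s0 1 t y⟩ : corner A s0 N)
            = 0 := Subtype.ext h0
        rw [this]
        exact Submodule.zero_mem _
    | zero =>
      intro t
      have : (⟨elemMap (1:A) s0 t • (0:N), elemMap_smul_mem_corner A s0 1 t 0⟩ : corner A s0 N)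
          = 0 := Subtype.ext (smul_zero _)
      rw [this]
      exact Submodule.zero_mem _
    | add y z hy hz ihy ihz =>
      intro t
      have : (⟨elemMap (1:A) s0 t • (y + z), elemMap_smul_mem_corner A s0 1 t _⟩ : corner A s0 N)
          = ⟨elemMap (1:A) s0 t • y, elemMap_smul_mem_corner A s0 1 t y⟩
            + ⟨elemMap (1:A) s0 t • z, elemMap_smul_mem_corner A s0 1 t z⟩ :=
        Subtype.ext (smul_add _ _ _)
      rw [this]
      exact Submodule.add_mem _ (ihy t) (ihz t)
    | smul f y hy ihy =>
      intro u
      have hdec := decomp y (hsm y).choose ((hsm y).choose_spec) (elemMap (1:A) s0 u * f)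
      have h5 : elemMap (1:A) s0 u • (f • y)
          = ∑ t ∈ (hsm y).choose, elemMap ((f (Finsupp.single t 1)) u) s0 s0
              • (elemMap (1:A) s0 t • y) := by
        rw [← mul_smul, hdec]
        refine Finset.sum_congr rfl fun t _ => ?_
        rw [row_mul_diag, ← mul_smul, elemMap_mul, if_pos rfl, mul_one]
      have h6 : (⟨elemMap (1:A) s0 u • (f • y), elemMap_smul_mem_corner A s0 1 u _⟩
            : corner A s0 N)
          = ∑ t ∈ (hsm y).choose, ((f (Finsupp.single t 1)) u)
              • (⟨elemMap (1:A) s0 t • y, elemMap_smul_mem_corner A s0 1 t y⟩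
                : corner A s0 N) := by
        refine Subtype.ext ?_
        show elemMap (1:A) s0 u • (f • y) = _
        rw [h5, AddSubmonoidClass.coe_finset_sum]
        rfl
      rw [h6]
      exact Submodule.sum_mem _ fun t _ => Submodule.smul_mem _ _ (ihy t)
  have hx := key (x : N) (hG ▸ Submodule.mem_top) s0
  have : x = ⟨elemMap (1:A) s0 s0 • (x : N), elemMap_smul_mem_corner A s0 1 s0 _⟩ :=
    Subtype.ext x.2.symm
  rw [this]
  exact hx

end

section Cat

open CategoryTheory

/-- isomorphisms in a full subcategory from isomorphisms of underlying objects. -/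
def fsIso {C : Type*} [Category C] {P : C → Prop} {X Y : ObjectProperty.FullSubcategory P}
    (e : X.obj ≅ Y.obj) : X ≅ Y :=
  ObjectProperty.isoMk P e

/-- the functor `M ↦ S →₀ M`. -/
def F0 : ModuleCat.{0} A ⥤ ModuleCat.{0} (BB A S) where
  obj M := ModuleCat.of (BB A S) (S →₀ M)
  map {M M'} φ := ModuleCat.ofHom (fmapL φ.hom)
  map_id M := by
    refine ModuleCat.hom_ext (LinearMap.ext fun x => ?_)
    show fmapL (𝟙 M : M ⟶ M).hom x = x
    ext s
    rw [fmapL_apply, Finsupp.mapRange_apply]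
    rfl
  map_comp {M M' M''} φ ψ := by
    refine ModuleCat.hom_ext (LinearMap.ext fun x => ?_)
    show fmapL (LinearMap.comp ψ.hom φ.hom) x
      = fmapL ψ.hom (fmapL φ.hom x)
    ext s
    rw [fmapL_apply, fmapL_apply, fmapL_apply, Finsupp.mapRange_apply,
      Finsupp.mapRange_apply, Finsupp.mapRange_apply]
    rfl

/-- the functor `N ↦ e N`. -/
def G0 (s0 : S) : ModuleCat.{0} (BB A S) ⥤ ModuleCat.{0} A where
  obj N := ModuleCat.of A (corner A s0 N)
  map {N N'} ψ := ModuleCat.ofHom (cornerMap s0 ψ.hom)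
  map_id N := ModuleCat.hom_ext (LinearMap.ext fun x => Subtype.ext rfl)
  map_comp ψ ψ' := ModuleCat.hom_ext (LinearMap.ext fun x => Subtype.ext rfl)


/-- the upward functor. -/
def FF (s0 : S) : ObjectProperty.FullSubcategory (fun M : ModuleCat.{0} A => Module.Finite A M) ⥤
    ObjectProperty.FullSubcategory (fun N : ModuleCat.{0} (BB A S) =>
      Module.Finite (BB A S) N ∧
        ∀ n : N, ∃ E : Finset S, ∀ f : BB A S,
          (∀ v : S →₀ A, (v.support : Set S) ⊆ (E : Set S) → f v = 0) →
            f • n = 0) :=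
  ObjectProperty.lift _ (ObjectProperty.ι _ ⋙ F0) (fun X => by
    constructor
    · haveI : Module.Finite A X.obj := X.property
      exact F_finite (M := X.obj) s0
    · intro n
      exact ⟨n.support, fun f hf => F_smooth n f hf⟩)

/-- the downward functor. -/
def GG (s0 : S) : ObjectProperty.FullSubcategory (fun N : ModuleCat.{0} (BB A S) =>
      Module.Finite (BB A S) N ∧
        ∀ n : N, ∃ E : Finset S, ∀ f : BB A S,
          (∀ v : S →₀ A, (v.support : Set S) ⊆ (E : Set S) → f v = 0) →
            f • n = 0) ⥤
    ObjectProperty.FullSubcategory (fun M : ModuleCat.{0} A => Module.Finite A M) :=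
  ObjectProperty.lift _ (ObjectProperty.ι _ ⋙ G0 s0) (fun Y => by
    haveI : Module.Finite (BB A S) Y.obj := Y.property.1
    exact corner_finite (N := Y.obj) s0 Y.property.2)

set_option maxHeartbeats 2000000 in
/-- the equivalence. -/
def theEquivalence (s0 : S) : ObjectProperty.FullSubcategory (fun M : ModuleCat.{0} A => Module.Finite A M) ≌
    ObjectProperty.FullSubcategory (fun N : ModuleCat.{0} (BB A S) =>
      Module.Finite (BB A S) N ∧
        ∀ n : N, ∃ E : Finset S, ∀ f : BB A S,
          (∀ v : S →₀ A, (v.support : Set S) ⊆ (E : Set S) → f v = 0) →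
            f • n = 0) := by
  refine CategoryTheory.Equivalence.mk (FF s0) (GG s0) ?_ ?_
  · refine NatIso.ofComponents
      (fun X => fsIso ((Iso.refl X.obj : X.obj ≅ ModuleCat.of A X.obj) ≪≫
        (unitEquiv s0 (M := X.obj)).toModuleIso)) ?_
    intro X Y φ
    let φ' : X.obj ⟶ Y.obj := φ.hom
    refine ObjectProperty.hom_ext _ (ModuleCat.hom_ext (LinearMap.ext fun m => ?_))
    refine Subtype.ext ?_
    show Finsupp.single s0 (φ'.hom m)
      = Finsupp.mapRange φ'.hom (map_zero φ'.hom) (Finsupp.single s0 m)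
    rw [Finsupp.mapRange_single]
  · refine NatIso.ofComponents
      (fun Y => fsIso
        ((LinearEquiv.ofBijective (counitMap (A := A) s0 (N := Y.obj))
          ⟨counitMap_injective s0,
            by
              have : Module.Finite (BB A S) Y.obj := Y.property.1
              exact counitMap_surjective s0 Y.property.2⟩).toModuleIso
          ≪≫ (Iso.refl Y.obj : ModuleCat.of _ Y.obj ≅ Y.obj))) ?_
    intro Y Y' ψ
    let ψ' : Y.obj ⟶ Y'.obj := ψ.hom
    refine ObjectProperty.hom_ext _ (ModuleCat.hom_ext (LinearMap.ext fun x => ?_))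
    show counitMap s0 (Finsupp.mapRange (cornerMap s0 ψ'.hom) (map_zero _) x)
      = ψ'.hom (counitMap s0 x)
    change S →₀ corner A s0 Y.obj at x
    induction x using Finsupp.induction with
    | zero => simp
    | single_add t m x _ _ ih =>
      rw [Finsupp.mapRange_add (by intro a b; rw [map_add]), map_add, map_add, map_add, ih]
      congr 1
      rw [Finsupp.mapRange_single, counitMap_single, counitMap_single, map_smul]
      rfl

end Cat

end Maps

end

end Stmt4Aux

open CategoryTheory in
/-- Let `A` be a unital ring, `S` countably infinite, and `B = M_S(A)` the ring
of column-finite matrices, i.e. `End_A(A^{⊕S})` with the finite topology (whose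
basic open ideals are `I_E = {f : f|_{A^{⊕E}} = 0}` for finite `E ⊆ S`).  The
category of finitely generated left `A`-modules is equivalent to the category of
smooth finitely generated left `B`-modules, where a `B`-module is smooth if the
annihilator of each element contains some `I_E` (equivalently, is open). -/
theorem stmt4 {A S : Type} [Ring A] [Infinite S] [Countable S] :
    Nonempty
      ((ObjectProperty.FullSubcategory fun M : ModuleCat.{0} A => Module.Finite A M) ≌
        (ObjectProperty.FullSubcategory fun N : ModuleCat.{0} (Module.End Aᵐᵒᵖ (S →₀ A)) =>
          Module.Finite (Module.End Aᵐᵒᵖ (S →₀ A)) N ∧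
            ∀ n : N, ∃ E : Finset S, ∀ f : Module.End Aᵐᵒᵖ (S →₀ A),
              (∀ v : S →₀ A, (v.support : Set S) ⊆ (E : Set S) → f v = 0) →
                f • n = 0)) :=
  ⟨Stmt4Aux.theEquivalence (Classical.arbitrary S)⟩
end

section
/- Let k be a field. In the category ^λO, the module P(μ) = H'/H'[μ] is projective: the functor M ↦ M_μ = {m ∈ M : [μ]m = 0} ≅ Hom_{H'}(P(μ), M) is exact on ^λO, and a morphism f : M → N in ^λO satisfies f(M_μ) = f(M)_μ for every μ ∈ Ŵλ. -/
/-- Projectivity of `P(μ) = H'/H'[μ]` in `^λO`.  With `H` the degenerate double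
affine Hecke algebra containing the polynomial algebra `S` via `ι`, `Λ = Ŵλ` the
orbit of points with pairwise comaximal ideals `[μ] = Iof μ`, and `M, N` modules
in `^λO` (every element killed by some finite intersection `[E]`), every
`H`-linear map `f : M → N` satisfies `f(M_μ) = f(M)_μ` for `μ ∈ Λ`
(where `M_μ = {m : [μ] m = 0} ≅ Hom_{H}(P(μ), M)`), and consequently the functor
`M ↦ M_μ` represented by `P(μ)` is exact on `^λO`: if `f` is surjective then
every element of `N_μ` lifts to `M_μ`. -/
theorem stmt13 {k S H M N : Type*} [Field k] [CharZero k] [CommRing S]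
    [Algebra k S] [Ring H] [Algebra k H]
    [AddCommGroup M] [Module H M] [AddCommGroup N] [Module H N]
    (ι : S →ₐ[k] H) (Λ : Set (S →ₐ[k] k)) (Iof : (S →ₐ[k] k) → Ideal S)
    (hco : ∀ μ ∈ Λ, ∀ ν ∈ Λ, μ ≠ ν → Iof μ ⊔ Iof ν = ⊤)
    (hlocM : ∀ m : M, ∃ E : Finset ↥Λ,
      ∀ p : S, (∀ μ ∈ E, p ∈ Iof (μ : ↥Λ).1) → ι p • m = 0)
    (hlocN : ∀ n : N, ∃ E : Finset ↥Λ,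
      ∀ p : S, (∀ μ ∈ E, p ∈ Iof (μ : ↥Λ).1) → ι p • n = 0)
    (μ : ↥Λ) (f : M →ₗ[H] N) :
    (⇑f '' {m : M | ∀ p ∈ Iof μ.1, ι p • m = 0}
        = Set.range ⇑f ∩ {n : N | ∀ p ∈ Iof μ.1, ι p • n = 0}) ∧
    (Function.Surjective ⇑f →
      ∀ n : N, (∀ p ∈ Iof μ.1, ι p • n = 0) →
        ∃ m : M, (∀ p ∈ Iof μ.1, ι p • m = 0) ∧ f m = n) := by
  have key : ∀ (m : M) (n : N), f m = n → (∀ p ∈ Iof μ.1, ι p • n = 0) →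
      ∃ m' : M, (∀ p ∈ Iof μ.1, ι p • m' = 0) ∧ f m' = n := by
    intro m n hfm hn
    obtain ⟨E, hE⟩ := hlocM m
    classical
    set s : Finset ↥Λ := E.filter (fun ν => ν ≠ μ) with hs
    have htop : Iof μ.1 ⊔ ∏ ν ∈ s, Iof (ν : ↥Λ).1 = ⊤ := by
      refine Ideal.sup_prod_eq_top ?_
      intro ν hν
      refine hco μ.1 μ.2 ν.1 ν.2 ?_
      intro h
      exact (Finset.mem_filter.mp hν).2 (Subtype.ext h.symm)
    have h1 : (1 : S) ∈ Iof μ.1 ⊔ ∏ ν ∈ s, Iof (ν : ↥Λ).1 := by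
      rw [htop]; trivial
    obtain ⟨a, ha, b, hb, hab⟩ := Submodule.mem_sup.mp h1
    have hbν : ∀ ν ∈ s, b ∈ Iof (ν : ↥Λ).1 := by
      intro ν hν
      exact (Ideal.prod_le_inf.trans (Finset.inf_le hν)) hb
    refine ⟨ι b • m, ?_, ?_⟩
    · intro p hp
      rw [← mul_smul, ← map_mul]
      refine hE _ ?_
      intro ν hν
      by_cases hνμ : ν = μ
      · subst hνμ
        exact Ideal.mul_mem_right _ _ hp
      · exact Ideal.mul_mem_left _ _ (hbν ν (Finset.mem_filter.mpr ⟨hν, hνμ⟩))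
    · rw [map_smul, hfm]
      have han : ι a • n = 0 := hn a ha
      have : ι a • n + ι b • n = n := by
        rw [← add_smul, ← map_add, hab, map_one, one_smul]
      rw [han, zero_add] at this
      exact this
  constructor
  · apply Set.Subset.antisymm
    · rintro _ ⟨m, hm, rfl⟩
      refine ⟨⟨m, rfl⟩, ?_⟩
      intro p hp
      rw [← map_smul, hm p hp, map_zero]
    · rintro n ⟨⟨m, rfl⟩, hn⟩
      obtain ⟨m', hm', hfm'⟩ := key m (f m) rfl hn
      exact ⟨m', hm', hfm'⟩
  · intro hsurj n hn
    obtain ⟨m, hm⟩ := hsurj n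
    exact key m n hm hn
end
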